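/- Let ψ, ν ∈ Ψ and assume lim_{δ → 0+} sup_{p ≥ 2} δ^{1/(p+1)}·ψ(2p)^{p/(p+1)}/ν(p) = 0. Then every martingale (S_n, 𝓕_n) with sup_n ‖S_n‖_{G(ψ)} < ∞ converges almost surely to a random variable S and lim_{n → ∞} ‖S_n − S‖_{G(ν)} = 0. -/

import Mathlib

open MeasureTheory Filter Set
open scoped ENNReal Topology
open scoped NNReal

/-- `ψ` belongs to the class `Ψ`: `p ↦ p·log ψ(p)` is continuous, convex, increasing,
tends to `+∞`, and `ψ(p) → ∞` as `p → ∞`; `ψ` is positive on `[2,∞)`. -/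
structure PsiClass (ψ : ℝ → ℝ) : Prop where
  pos : ∀ p : ℝ, 2 ≤ p → 0 < ψ p
  cont : ContinuousOn (fun p => p * Real.log (ψ p)) (Set.Ici 2)
  convex : ConvexOn ℝ (Set.Ici 2) (fun p => p * Real.log (ψ p))
  mono : MonotoneOn (fun p => p * Real.log (ψ p)) (Set.Ici 2)
  tendsto_top : Filter.Tendsto (fun p => p * Real.log (ψ p)) Filter.atTop Filter.atTop
  psi_tendsto_top : Filter.Tendsto ψ Filter.atTop Filter.atTop

/-- The norm `‖η‖_{G(ψ)} = sup_{p ≥ 2} |η|_p / ψ(p)` (valued in `ℝ≥0∞`). -/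
noncomputable def Gnorm {Ω : Type*} [MeasurableSpace Ω] (μ : Measure Ω)
    (ψ : ℝ → ℝ) (η : Ω → ℝ) : ℝ≥0∞ :=
  ⨆ p : {p : ℝ // 2 ≤ p}, eLpNorm η (ENNReal.ofReal (p : ℝ)) μ / ENNReal.ofReal (ψ (p : ℝ))


lemma psi_lower {ψ : ℝ → ℝ} (hψ : PsiClass ψ) {q : ℝ} (hq : 2 ≤ q) :
    min 1 (ψ 2) ≤ ψ q := by
  have h2 : (2:ℝ) ∈ Set.Ici (2:ℝ) := Set.mem_Ici.mpr le_rfl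
  have hqm : q ∈ Set.Ici (2:ℝ) := Set.mem_Ici.mpr hq
  have hmono : 2 * Real.log (ψ 2) ≤ q * Real.log (ψ q) := hψ.mono h2 hqm hq
  have hq0 : (0:ℝ) < q := by linarith
  have hψ2 := hψ.pos 2 le_rfl
  have hψq := hψ.pos q hq
  rcases le_or_gt 0 (Real.log (ψ 2)) with hl | hl
  · have : 0 ≤ q * Real.log (ψ q) := le_trans (by positivity) hmono
    have hlogq : 0 ≤ Real.log (ψ q) := nonneg_of_mul_nonneg_left (by linarith [this] : 0 ≤ Real.log (ψ q) * q) hq0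
    have : (1:ℝ) ≤ ψ q := by
      rwa [← Real.log_nonneg_iff hψq]
    exact le_trans (min_le_left _ _) this
  · have hlog : Real.log (ψ 2) ≤ Real.log (ψ q) := by
      have h1 : q * Real.log (ψ 2) ≤ 2 * Real.log (ψ 2) := by nlinarith
      have h3 : q * Real.log (ψ 2) ≤ q * Real.log (ψ q) := le_trans h1 hmono
      exact (mul_le_mul_iff_right₀ hq0).mp h3
    have : ψ 2 ≤ ψ q := (Real.log_le_log_iff hψ2 hψq).mp hlog
    exact le_trans (min_le_right _ _) this


lemma interp_aux {Ω : Type*} [MeasurableSpace Ω] {μ : Measure Ω} {f : Ω → ℝ}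
    (hf : AEStronglyMeasurable f μ) {p : ℝ} (hp : 2 ≤ p) :
    eLpNorm' f p μ ≤ eLpNorm' f 2 μ ^ (1/(p-1)) * eLpNorm' f (2*p) μ ^ ((p-2)/(p-1)) := by
  rcases eq_or_lt_of_le hp with rfl | hp2
  · norm_num
  have hp0 : (0:ℝ) < p := by linarith
  have hp1 : (0:ℝ) < p - 1 := by linarith
  have hpm2 : (0:ℝ) < p - 2 := by linarith
  set g : Ω → ℝ≥0∞ := fun x => (‖f x‖₊ : ℝ≥0∞) with hgdef
  have hg : AEMeasurable g μ := hf.enorm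
  set u : ℝ := 2*(p-1)/p with hu
  set v : ℝ := 2*(p-1)/(p-2) with hv
  have hconj : u.HolderConjugate v := by
    rw [Real.holderConjugate_iff]
    constructor
    · rw [hu, lt_div_iff₀ hp0]; linarith
    · rw [hu, hv]; field_simp; ring
  have key := ENNReal.lintegral_mul_le_Lp_mul_Lq μ hconj
      (hg.pow_const (p/(p-1))) (hg.pow_const (p*(p-2)/(p-1)))
  have e1 : (∫⁻ x, ((fun x => g x ^ (p/(p-1))) * fun x => g x ^ (p*(p-2)/(p-1))) x ∂μ)
      = ∫⁻ x, g x ^ p ∂μ := by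
    congr 1; funext x
    simp only [Pi.mul_apply]
    rw [← ENNReal.rpow_add_of_nonneg _ _ (by positivity) (by positivity)]
    congr 1
    field_simp
    ring
  have e2 : (∫⁻ x, (g x ^ (p/(p-1))) ^ u ∂μ) = ∫⁻ x, g x ^ (2:ℝ) ∂μ := by
    congr 1; funext x
    rw [← ENNReal.rpow_mul]
    congr 1
    rw [hu]; field_simp
  have e3 : (∫⁻ x, (g x ^ (p*(p-2)/(p-1))) ^ v ∂μ) = ∫⁻ x, g x ^ (2*p) ∂μ := by
    congr 1; funext x
    rw [← ENNReal.rpow_mul]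
    congr 1
    rw [hv]; field_simp
  rw [e1, e2, e3] at key
  -- now key : ∫⁻ g^p ≤ (∫⁻ g^2)^(1/u) * (∫⁻ g^(2p))^(1/v)
  have goal1 : eLpNorm' f p μ = (∫⁻ x, g x ^ p ∂μ) ^ (1/p) := rfl
  have goal2 : eLpNorm' f 2 μ = (∫⁻ x, g x ^ (2:ℝ) ∂μ) ^ (1/(2:ℝ)) := rfl
  have goal3 : eLpNorm' f (2*p) μ = (∫⁻ x, g x ^ (2*p) ∂μ) ^ (1/(2*p)) := rfl
  rw [goal1, goal2, goal3]
  calc (∫⁻ x, g x ^ p ∂μ) ^ (1/p)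
      ≤ ((∫⁻ x, g x ^ (2:ℝ) ∂μ) ^ (1/u) * (∫⁻ x, g x ^ (2*p) ∂μ) ^ (1/v)) ^ (1/p) :=
        ENNReal.rpow_le_rpow key (by positivity)
    _ = ((∫⁻ x, g x ^ (2:ℝ) ∂μ) ^ (1/(2:ℝ))) ^ (1/(p-1))
        * ((∫⁻ x, g x ^ (2*p) ∂μ) ^ (1/(2*p))) ^ ((p-2)/(p-1)) := by
        rw [ENNReal.mul_rpow_of_nonneg _ _ (by positivity), ← ENNReal.rpow_mul,
          ← ENNReal.rpow_mul, ← ENNReal.rpow_mul, ← ENNReal.rpow_mul]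
        congr 1
        · congr 1
          rw [hu]; field_simp
        · congr 1
          rw [hv]; field_simp

lemma real_key {δ M mm ψ2p p : ℝ} (hδ0 : 0 < δ) (hδ1 : δ ≤ 1) (hM : 1 ≤ M)
    (hmm0 : 0 < mm) (hmm1 : mm ≤ 1) (hψm : mm ≤ ψ2p) (hp : 2 ≤ p) :
    δ ^ (1/(p-1)) * (M * ψ2p) ^ ((p-2)/(p-1))
      ≤ (M * mm⁻¹) * (δ ^ (1/(p+1)) * ψ2p ^ (p/(p+1))) := by
  have hψ0 : 0 < ψ2p := lt_of_lt_of_le hmm0 hψm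
  have hp1 : (0:ℝ) < p - 1 := by linarith
  have hp3 : (0:ℝ) < p + 1 := by linarith
  have hc0 : 0 ≤ (p-2)/(p-1) := div_nonneg (by linarith) hp1.le
  have hc1 : (p-2)/(p-1) ≤ 1 := by rw [div_le_one hp1]; linarith
  set e : ℝ := 2/((p+1)*(p-1)) with he
  have he0 : 0 < e := by positivity
  have he1 : e ≤ 1 := by
    rw [he, div_le_one (by positivity)]; nlinarith
  have hce : (p-2)/(p-1) = p/(p+1) + (-e) := by
    rw [he]; field_simp; ring
  have h1 : δ ^ (1/(p-1)) ≤ δ ^ (1/(p+1)) :=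
    Real.rpow_le_rpow_of_exponent_ge hδ0 hδ1
      (by apply div_le_div_of_nonneg_left (by norm_num) hp1; linarith)
  have h2 : M ^ ((p-2)/(p-1)) ≤ M := by
    nth_rewrite 2 [← Real.rpow_one M]
    exact Real.rpow_le_rpow_of_exponent_le hM hc1
  have h3 : ψ2p ^ ((p-2)/(p-1)) ≤ mm⁻¹ * ψ2p ^ (p/(p+1)) := by
    rw [hce, Real.rpow_add hψ0]
    have hneg : ψ2p ^ (-e) ≤ mm⁻¹ := by
      rw [Real.rpow_neg hψ0.le]
      have l1 : mm ^ e ≤ ψ2p ^ e := Real.rpow_le_rpow hmm0.le hψm he0.le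
      have l2 : mm ≤ mm ^ e := by
        nth_rewrite 1 [← Real.rpow_one mm]
        exact Real.rpow_le_rpow_of_exponent_ge hmm0 hmm1 he1
      have hmmepos : 0 < mm ^ e := Real.rpow_pos_of_pos hmm0 e
      calc (ψ2p ^ e)⁻¹ ≤ (mm ^ e)⁻¹ := by
            apply inv_anti₀ hmmepos l1
        _ ≤ mm⁻¹ := by apply inv_anti₀ hmm0 l2
    calc ψ2p ^ (p/(p+1)) * ψ2p ^ (-e) ≤ ψ2p ^ (p/(p+1)) * mm⁻¹ := by
          apply mul_le_mul_of_nonneg_left hneg (by positivity)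
      _ = mm⁻¹ * ψ2p ^ (p/(p+1)) := by ring
  have hMψ : (M * ψ2p) ^ ((p-2)/(p-1)) = M ^ ((p-2)/(p-1)) * ψ2p ^ ((p-2)/(p-1)) :=
    Real.mul_rpow (by linarith) hψ0.le
  calc δ ^ (1/(p-1)) * (M * ψ2p) ^ ((p-2)/(p-1))
      = δ ^ (1/(p-1)) * (M ^ ((p-2)/(p-1)) * ψ2p ^ ((p-2)/(p-1))) := by rw [hMψ]
    _ ≤ δ ^ (1/(p+1)) * (M * (mm⁻¹ * ψ2p ^ (p/(p+1)))) := by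
        apply mul_le_mul h1 (mul_le_mul h2 h3 (by positivity) (by linarith)) (by positivity)
          (by positivity)
    _ = (M * mm⁻¹) * (δ ^ (1/(p+1)) * ψ2p ^ (p/(p+1))) := by ring

lemma key_est {Ω : Type*} [MeasurableSpace Ω] {μ : Measure Ω} {f : Ω → ℝ}
    (hfm : AEStronglyMeasurable f μ) {ψ ν : ℝ → ℝ} {δ M mm : ℝ}
    (hδ0 : 0 < δ) (hδ1 : δ ≤ 1) (hM : 1 ≤ M) (hmm0 : 0 < mm) (hmm1 : mm ≤ 1)
    {p : ℝ} (hp : 2 ≤ p) (hψm : mm ≤ ψ (2*p)) (hνp : 0 < ν p)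
    (h2 : eLpNorm f 2 μ ≤ ENNReal.ofReal δ)
    (h2p : eLpNorm f (ENNReal.ofReal (2*p)) μ ≤ ENNReal.ofReal (M * ψ (2*p))) :
    eLpNorm f (ENNReal.ofReal p) μ / ENNReal.ofReal (ν p)
      ≤ ENNReal.ofReal (M * mm⁻¹)
        * ENNReal.ofReal (δ ^ (1/(p+1)) * (ψ (2*p)) ^ (p/(p+1)) / ν p) := by
  have hψ0 : 0 < ψ (2*p) := lt_of_lt_of_le hmm0 hψm
  have hp0 : (0:ℝ) < p := by linarith
  have hp1 : (0:ℝ) < p - 1 := by linarith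
  have e0 : eLpNorm f (ENNReal.ofReal p) μ = eLpNorm' f p μ := by
    rw [eLpNorm_eq_eLpNorm' (by simpa using hp0) ENNReal.ofReal_ne_top,
      ENNReal.toReal_ofReal hp0.le]
  have e2 : eLpNorm f 2 μ = eLpNorm' f 2 μ := by
    rw [eLpNorm_eq_eLpNorm' (by norm_num) (by norm_num)]
    norm_num
  have e2p : eLpNorm f (ENNReal.ofReal (2*p)) μ = eLpNorm' f (2*p) μ := by
    rw [eLpNorm_eq_eLpNorm' (by simpa using by linarith) ENNReal.ofReal_ne_top,
      ENNReal.toReal_ofReal (by linarith)]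
  rw [e0]
  have step1 : eLpNorm' f p μ
      ≤ ENNReal.ofReal (δ ^ (1/(p-1)) * (M * ψ (2*p)) ^ ((p-2)/(p-1))) := by
    calc eLpNorm' f p μ
        ≤ eLpNorm' f 2 μ ^ (1/(p-1)) * eLpNorm' f (2*p) μ ^ ((p-2)/(p-1)) :=
          interp_aux hfm hp
      _ ≤ (ENNReal.ofReal δ) ^ (1/(p-1)) * (ENNReal.ofReal (M * ψ (2*p))) ^ ((p-2)/(p-1)) := by
          apply mul_le_mul'
          · exact ENNReal.rpow_le_rpow (e2 ▸ h2) (by positivity)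
          · exact ENNReal.rpow_le_rpow (e2p ▸ h2p) (div_nonneg (by linarith) hp1.le)
      _ = ENNReal.ofReal (δ ^ (1/(p-1)) * (M * ψ (2*p)) ^ ((p-2)/(p-1))) := by
          rw [ENNReal.ofReal_rpow_of_pos hδ0, ENNReal.ofReal_rpow_of_pos (by positivity),
            ← ENNReal.ofReal_mul (by positivity)]
  have step2 : ENNReal.ofReal (δ ^ (1/(p-1)) * (M * ψ (2*p)) ^ ((p-2)/(p-1)))
      ≤ ENNReal.ofReal ((M * mm⁻¹) * (δ ^ (1/(p+1)) * (ψ (2*p)) ^ (p/(p+1)))) :=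
    ENNReal.ofReal_le_ofReal (real_key hδ0 hδ1 hM hmm0 hmm1 hψm hp)
  calc eLpNorm' f p μ / ENNReal.ofReal (ν p)
      ≤ ENNReal.ofReal ((M * mm⁻¹) * (δ ^ (1/(p+1)) * (ψ (2*p)) ^ (p/(p+1))))
          / ENNReal.ofReal (ν p) :=
        ENNReal.div_le_div_right (step1.trans step2) _
    _ = ENNReal.ofReal ((M * mm⁻¹) * (δ ^ (1/(p+1)) * (ψ (2*p)) ^ (p/(p+1))) / ν p) := by
        rw [ENNReal.ofReal_div_of_pos hνp]
    _ = ENNReal.ofReal (M * mm⁻¹)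
        * ENNReal.ofReal (δ ^ (1/(p+1)) * (ψ (2*p)) ^ (p/(p+1)) / ν p) := by
        rw [mul_div_assoc, ENNReal.ofReal_mul (by positivity)]

theorem stmt15 {Ω : Type*} [m0 : MeasurableSpace Ω] (μ : Measure Ω) [IsProbabilityMeasure μ]
    (ψ ν : ℝ → ℝ) (hψ : PsiClass ψ) (hν : PsiClass ν)
    (hcond : Filter.Tendsto
      (fun δ : ℝ => ⨆ p : {p : ℝ // 2 ≤ p},
        ENNReal.ofReal (δ ^ (1/((p : ℝ) + 1)) * (ψ (2 * (p : ℝ))) ^ ((p : ℝ)/((p : ℝ) + 1)) / ν (p : ℝ)))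
      (𝓝[>] (0:ℝ)) (𝓝 0))
    (ℱ : Filtration ℕ m0) (S : ℕ → Ω → ℝ) (hmart : Martingale S ℱ μ)
    (hbdd : (⨆ n : ℕ, Gnorm μ ψ (S n)) < ⊤) :
    ∃ Slim : Ω → ℝ,
      (∀ᵐ ω ∂μ, Filter.Tendsto (fun n => S n ω) Filter.atTop (𝓝 (Slim ω))) ∧
      Filter.Tendsto (fun n => Gnorm μ ν (fun ω => S n ω - Slim ω)) Filter.atTop (𝓝 0) := by
  classical
  set B := ⨆ n : ℕ, Gnorm μ ψ (S n) with hBdef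
  have hBne : B ≠ ⊤ := hbdd.ne
  have hsm : ∀ n, AEStronglyMeasurable (S n) μ :=
    fun n => ((hmart.stronglyAdapted n).mono (ℱ.le n)).aestronglyMeasurable
  -- uniform bound on all Lᵖ norms
  have hSB : ∀ n, ∀ p : ℝ, 2 ≤ p →
      eLpNorm (S n) (ENNReal.ofReal p) μ ≤ B * ENNReal.ofReal (ψ p) := by
    intro n p hp
    have h1 : eLpNorm (S n) (ENNReal.ofReal p) μ / ENNReal.ofReal (ψ p) ≤ B := by
      refine le_trans ?_ (le_iSup (fun n => Gnorm μ ψ (S n)) n)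
      exact le_iSup (fun q : {q : ℝ // 2 ≤ q} =>
        eLpNorm (S n) (ENNReal.ofReal (q : ℝ)) μ / ENNReal.ofReal (ψ (q : ℝ))) ⟨p, hp⟩
    have hψp : ENNReal.ofReal (ψ p) ≠ 0 := by
      simpa using (hψ.pos p hp)
    rwa [ENNReal.div_le_iff_le_mul (Or.inl hψp) (Or.inl ENNReal.ofReal_ne_top)] at h1
  have h2eq : (2 : ℝ≥0∞) = ENNReal.ofReal (2:ℝ) := by norm_num
  have h4eq : (4 : ℝ≥0∞) = ENNReal.ofReal (4:ℝ) := by norm_num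
  -- L¹ bound
  set R0 : ℝ≥0∞ := B * ENNReal.ofReal (ψ 2) with hR0def
  have hR0ne : R0 ≠ ⊤ := ENNReal.mul_ne_top hBne ENNReal.ofReal_ne_top
  have hS1 : ∀ n, eLpNorm (S n) 1 μ ≤ (R0.toNNReal : ℝ≥0∞) := by
    intro n
    rw [ENNReal.coe_toNNReal hR0ne]
    refine le_trans (eLpNorm_le_eLpNorm_of_exponent_le (p := 1) (q := 2)
      (by norm_num) (hsm n)) ?_
    rw [h2eq]
    exact hSB n 2 le_rfl
  set Slim : Ω → ℝ := Filtration.limitProcess S ℱ μ with hSlimdef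
  have hae : ∀ᵐ ω ∂μ, Tendsto (fun n => S n ω) atTop (𝓝 (Slim ω)) :=
    hmart.submartingale.ae_tendsto_limitProcess hS1
  have hSlimm : AEStronglyMeasurable Slim μ :=
    (Filtration.stronglyMeasurable_limitProcess.mono (iSup_le ℱ.le)).aestronglyMeasurable
  refine ⟨Slim, hae, ?_⟩
  -- bound on the limit
  have hSlimB : ∀ p : ℝ, 2 ≤ p →
      eLpNorm Slim (ENNReal.ofReal p) μ ≤ B * ENNReal.ofReal (ψ p) := by
    intro p hp
    refine le_trans (Lp.eLpNorm_lim_le_liminf_eLpNorm hsm Slim hae) ?_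
    exact liminf_le_of_frequently_le' (Frequently.of_forall fun n => hSB n p hp)
  -- uniform integrability in L²
  have hui : UnifIntegrable S 2 μ := by
    refine unifIntegrable_of (by norm_num) (by norm_num) hsm ?_
    intro ε hε
    set D : ℝ≥0∞ := B * ENNReal.ofReal (ψ 4) with hDdef
    have hDne : D ≠ ⊤ := ENNReal.mul_ne_top hBne ENNReal.ofReal_ne_top
    have hD : ∀ i, eLpNorm (S i) 4 μ ≤ D := by
      intro i; rw [h4eq]; exact hSB i 4 (by norm_num)
    set q : ℝ≥0∞ := D * D with hqdef
    have hqne : q ≠ ⊤ := ENNReal.mul_ne_top hDne hDne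
    have hεne : ENNReal.ofReal ε ≠ 0 := by simpa using hε
    set C : ℝ≥0 := (q / ENNReal.ofReal ε).toNNReal + 1 with hCdef
    have hC0 : (0:ℝ≥0) < C := by positivity
    have hCR : (0:ℝ) < (C:ℝ) := hC0
    refine ⟨C, fun i => ?_⟩
    have hpt : ∀ x, ‖({x | C ≤ ‖S i x‖₊}.indicator (S i)) x‖
        ≤ ‖(C:ℝ)⁻¹ * ‖S i x‖ ^ (2:ℝ)‖ := by
      intro x
      by_cases hx : x ∈ {x | C ≤ ‖S i x‖₊}
      · rw [Set.indicator_of_mem hx]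
        have hCx : (C:ℝ) ≤ ‖S i x‖ := hx
        have h1 : ‖S i x‖ ≤ (C:ℝ)⁻¹ * ‖S i x‖ ^ (2:ℝ) := by
          rw [Real.rpow_two]
          rw [inv_mul_eq_div, le_div_iff₀ hCR]
          nlinarith [norm_nonneg (S i x)]
        refine le_trans h1 (le_abs_self _)
      · rw [Set.indicator_of_notMem hx, norm_zero]
        positivity
    calc eLpNorm ({x | C ≤ ‖S i x‖₊}.indicator (S i)) 2 μ
        ≤ eLpNorm (fun x => (C:ℝ)⁻¹ * ‖S i x‖ ^ (2:ℝ)) 2 μ := eLpNorm_mono hpt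
      _ = ‖(C:ℝ)⁻¹‖₊ * eLpNorm (fun x => ‖S i x‖ ^ (2:ℝ)) 2 μ := by
          rw [← enorm_eq_nnnorm, ← eLpNorm_const_smul ((C:ℝ)⁻¹) (fun x => ‖S i x‖ ^ (2:ℝ)) 2 μ]
          rfl
      _ = ‖(C:ℝ)⁻¹‖₊ * eLpNorm (S i) (2 * ENNReal.ofReal 2) μ ^ (2:ℝ) := by
          rw [eLpNorm_norm_rpow (S i) (by norm_num : (0:ℝ) < 2)]
      _ ≤ (C:ℝ≥0∞)⁻¹ * q := by
          have he : (2 : ℝ≥0∞) * ENNReal.ofReal 2 = 4 := by norm_num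
          rw [he]
          have hn : (‖(C:ℝ)⁻¹‖₊ : ℝ≥0∞) = (C:ℝ≥0∞)⁻¹ := by
            simp [ENNReal.coe_inv hC0.ne']
          rw [hn]
          refine mul_le_mul_right ?_ _
          have : eLpNorm (S i) 4 μ ^ (2:ℝ) ≤ D ^ (2:ℝ) :=
            ENNReal.rpow_le_rpow (hD i) (by norm_num)
          refine le_trans this ?_
          have h2n : ((2:ℝ)) = ((2:ℕ):ℝ) := by norm_num
          rw [h2n, ENNReal.rpow_natCast, pow_two]
      _ ≤ ENNReal.ofReal ε := by
          have hCge : q / ENNReal.ofReal ε ≤ (C:ℝ≥0∞) := by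
            have hfin : q / ENNReal.ofReal ε ≠ ⊤ := (ENNReal.div_lt_top hqne hεne).ne
            rw [hCdef]
            push_cast
            rw [ENNReal.coe_toNNReal hfin]
            exact le_self_add
          have hqle : q ≤ (C:ℝ≥0∞) * ENNReal.ofReal ε := by
            rw [← ENNReal.div_le_iff_le_mul (Or.inl hεne) (Or.inl ENNReal.ofReal_ne_top)]
            exact hCge
          calc (C:ℝ≥0∞)⁻¹ * q ≤ (C:ℝ≥0∞)⁻¹ * ((C:ℝ≥0∞) * ENNReal.ofReal ε) :=
                mul_le_mul_right hqle _
            _ = ENNReal.ofReal ε := by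
                rw [← mul_assoc, ENNReal.inv_mul_cancel (by exact_mod_cast hC0.ne')
                  ENNReal.coe_ne_top, one_mul]
  -- L² convergence
  have hSlim2 : MemLp Slim 2 μ := by
    refine ⟨hSlimm, ?_⟩
    rw [h2eq]
    exact lt_of_le_of_lt (hSlimB 2 le_rfl)
      (ENNReal.mul_lt_top (lt_top_iff_ne_top.mpr hBne) ENNReal.ofReal_lt_top)
  have htm : TendstoInMeasure μ S atTop Slim := tendstoInMeasure_of_tendsto_ae hsm hae
  have hL2 : Tendsto (fun n => eLpNorm (S n - Slim) 2 μ) atTop (𝓝 0) :=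
    tendsto_Lp_finite_of_tendstoInMeasure (by norm_num) (by norm_num) hsm hSlim2 hui htm
  have hX2fin : ∀ n, eLpNorm (S n - Slim) 2 μ ≠ ⊤ := by
    intro n
    have hs2 : MemLp (S n) 2 μ := by
      refine ⟨hsm n, ?_⟩
      rw [h2eq]
      exact lt_of_le_of_lt (hSB n 2 le_rfl)
        (ENNReal.mul_lt_top (lt_top_iff_ne_top.mpr hBne) ENNReal.ofReal_lt_top)
    exact (hs2.sub hSlim2).2.ne
  set δseq : ℕ → ℝ := fun n => (eLpNorm (S n - Slim) 2 μ).toReal with hδseqdef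
  have hδseq : Tendsto δseq atTop (𝓝 0) := by
    have := (ENNReal.tendsto_toReal_iff hX2fin (x := 0) (by norm_num)).mpr hL2
    simpa using this
  -- constants
  set M : ℝ := 2 * B.toReal + 1 with hMdef
  have hM : 1 ≤ M := by
    have := ENNReal.toReal_nonneg (a := B)
    rw [hMdef]; linarith
  set mm : ℝ := min 1 (ψ 2) with hmmdef
  have hmm0 : 0 < mm := lt_min one_pos (hψ.pos 2 le_rfl)
  have hmm1 : mm ≤ 1 := min_le_left _ _
  set L : ℝ≥0∞ := ENNReal.ofReal (M * mm⁻¹) with hLdef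
  have hL0 : L ≠ 0 := by
    rw [hLdef]
    simp only [ne_eq, ENNReal.ofReal_eq_zero, not_le]
    positivity
  have hLtop : L ≠ ⊤ := ENNReal.ofReal_ne_top
  -- the 2p-norm bound on differences
  have hX2p : ∀ n, ∀ p : ℝ, 2 ≤ p →
      eLpNorm (S n - Slim) (ENNReal.ofReal (2*p)) μ ≤ ENNReal.ofReal (M * ψ (2*p)) := by
    intro n p hp
    have h2p2 : (2:ℝ) ≤ 2*p := by linarith
    have htri : eLpNorm (S n - Slim) (ENNReal.ofReal (2*p)) μ
        ≤ eLpNorm (S n) (ENNReal.ofReal (2*p)) μ + eLpNorm Slim (ENNReal.ofReal (2*p)) μ :=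
      eLpNorm_sub_le (hsm n) hSlimm (ENNReal.one_le_ofReal.mpr (by linarith))
    refine htri.trans ?_
    have hb1 := hSB n (2*p) h2p2
    have hb2 := hSlimB (2*p) h2p2
    refine le_trans (add_le_add hb1 hb2) ?_
    have hBor : B = ENNReal.ofReal B.toReal := (ENNReal.ofReal_toReal hBne).symm
    calc B * ENNReal.ofReal (ψ (2*p)) + B * ENNReal.ofReal (ψ (2*p))
        = (2:ℝ≥0∞) * B * ENNReal.ofReal (ψ (2*p)) := by ring
      _ ≤ ENNReal.ofReal M * ENNReal.ofReal (ψ (2*p)) := by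
          refine mul_le_mul_left ?_ _
          rw [hBor, h2eq, ← ENNReal.ofReal_mul (by norm_num)]
          exact ENNReal.ofReal_le_ofReal (by rw [hMdef]; linarith)
      _ = ENNReal.ofReal (M * ψ (2*p)) := by
          rw [← ENNReal.ofReal_mul (by rw [hMdef]; positivity)]
  -- final convergence
  rw [ENNReal.tendsto_atTop_zero]
  intro ε hε
  have hε' : 0 < ε / L := ENNReal.div_pos hε.ne' hLtop
  have hEv : ∀ᶠ δ in 𝓝[>] (0:ℝ),
      (⨆ p : {p : ℝ // 2 ≤ p}, ENNReal.ofReal (δ ^ (1/((p : ℝ) + 1))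
        * (ψ (2 * (p : ℝ))) ^ ((p : ℝ)/((p : ℝ) + 1)) / ν (p : ℝ))) < ε / L :=
    hcond.eventually_lt_const hε'
  rw [eventually_nhdsWithin_iff, Metric.eventually_nhds_iff] at hEv
  obtain ⟨δ₀, hδ₀pos, hδ₀⟩ := hEv
  have hev2 : ∀ᶠ n in atTop, δseq n < min δ₀ 1 :=
    hδseq.eventually_lt_const (lt_min hδ₀pos one_pos)
  obtain ⟨N, hN⟩ := eventually_atTop.mp hev2
  refine ⟨N, fun n hn => ?_⟩
  have hXm : AEStronglyMeasurable (S n - Slim) μ := (hsm n).sub hSlimm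
  by_cases hz : eLpNorm (S n - Slim) 2 μ = 0
  · have hX0 : S n - Slim =ᵐ[μ] 0 := (eLpNorm_eq_zero_iff hXm two_ne_zero).mp hz
    rw [Gnorm]
    refine iSup_le fun p => ?_
    rw [show (fun ω => S n ω - Slim ω) = S n - Slim from rfl, eLpNorm_congr_ae hX0,
      eLpNorm_zero, ENNReal.zero_div]
    exact zero_le
  · have hδn0 : 0 < δseq n :=
      ENNReal.toReal_pos hz (hX2fin n)
    have hδn' := hN n hn
    have hδn1 : δseq n ≤ 1 := le_of_lt (lt_of_lt_of_le hδn' (min_le_right _ _))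
    have hδnδ₀ : δseq n < δ₀ := lt_of_lt_of_le hδn' (min_le_left _ _)
    have h2n : eLpNorm (S n - Slim) 2 μ ≤ ENNReal.ofReal (δseq n) :=
      le_of_eq (ENNReal.ofReal_toReal (hX2fin n)).symm
    have hkey : Gnorm μ ν (fun ω => S n ω - Slim ω)
        ≤ L * ⨆ p : {p : ℝ // 2 ≤ p}, ENNReal.ofReal ((δseq n) ^ (1/((p : ℝ) + 1))
          * (ψ (2 * (p : ℝ))) ^ ((p : ℝ)/((p : ℝ) + 1)) / ν (p : ℝ)) := by
      rw [Gnorm, ENNReal.mul_iSup]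
      refine iSup_mono fun p => ?_
      have hp2 : (2:ℝ) ≤ (p : ℝ) := p.2
      have hψm : mm ≤ ψ (2 * (p:ℝ)) := psi_lower hψ (by linarith)
      exact key_est hXm hδn0 hδn1 hM hmm0 hmm1 hp2 hψm (hν.pos _ hp2) h2n
        (hX2p n p hp2)
    refine hkey.trans ?_
    have hFδ : (⨆ p : {p : ℝ // 2 ≤ p}, ENNReal.ofReal ((δseq n) ^ (1/((p : ℝ) + 1))
        * (ψ (2 * (p : ℝ))) ^ ((p : ℝ)/((p : ℝ) + 1)) / ν (p : ℝ))) ≤ ε / L := by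
      refine le_of_lt (hδ₀ ?_ ?_)
      · rw [Real.dist_eq, sub_zero, abs_of_pos hδn0]; exact hδnδ₀
      · exact hδn0
    calc L * _ ≤ L * (ε / L) := mul_le_mul_right hFδ _
      _ = ε := ENNReal.mul_div_cancel hL0 hLtop
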